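/- Let D+ be a canonical positive Boolean automaton double-cycle with left cycle of size n and right cycle of size m (f_c(x) = x^ℓ_{n-1} ∧ x^r_{m-1}, all other automata copy their predecessor). For any configuration x containing at least one automaton at state 1 in the left cycle and at least one at state 1 in the right cycle, there exists a sequence of at most 2(n+m)-5 asynchronous single-automaton updates transforming x into the all-ones configuration (1^n, 1^m). -/
import Mathlib


/-- A configuration of a Boolean automaton double-cycle with cycles of sizes `n`
and `m`: the shared automaton `c` is index 0 of both cycles (so valid
configurations satisfy `x.1 0 = x.2 0`). -/
abbrev Cfg (n m : ℕ) := (Fin n → Bool) × (Fin m → Bool)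

/-- One asynchronous single-automaton update in a double-cycle whose shared
automaton `c` computes `fc`; every non-shared automaton copies its predecessor. -/
inductive Step {n m : ℕ} (fc : Cfg n m → Bool) : Cfg n m → Cfg n m → Prop
  | left (x : Cfg n m) (i : Fin n) (hi : 1 ≤ i.val) :
      Step fc x (Function.update x.1 i (x.1 ⟨i.val - 1, by have := i.isLt; omega⟩), x.2)
  | right (x : Cfg n m) (j : Fin m) (hj : 1 ≤ j.val) :
      Step fc x (x.1, Function.update x.2 j (x.2 ⟨j.val - 1, by have := j.isLt; omega⟩))
  | center (x : Cfg n m) (i : Fin n) (j : Fin m) (hi : i.val = 0) (hj : j.val = 0) :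
      Step fc x (Function.update x.1 i (fc x), Function.update x.2 j (fc x))

/-- `Steps fc k x y`: configuration `y` is obtained from `x` by exactly `k`
asynchronous single-automaton updates. -/
def Steps {n m : ℕ} (fc : Cfg n m → Bool) : ℕ → Cfg n m → Cfg n m → Prop
  | 0, x, y => x = y
  | k + 1, x, y => ∃ z, Step fc x z ∧ Steps fc k z y

theorem steps_trans {n m : ℕ} {fc : Cfg n m → Bool} :
    ∀ {k l : ℕ} {x y z : Cfg n m}, Steps fc k x y → Steps fc l y z →
      Steps fc (k + l) x z := by
  intro k
  induction k with
  | zero => intro l x y z h1 h2; cases h1; simpa using h2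
  | succ k ih =>
    intro l x y z h1 h2
    obtain ⟨w, hw, hs⟩ := h1
    rw [Nat.succ_add]
    exact ⟨w, hw, ih hs h2⟩

theorem propLeft {n m : ℕ} (fc : Cfg n m → Bool) :
    ∀ (d : ℕ) (x : Cfg n m) (a : ℕ) (h : a + d < n),
      x.1 ⟨a, by omega⟩ = true →
      Steps fc d x
        ((fun i => if a ≤ i.val ∧ i.val ≤ a + d then true else x.1 i), x.2) := by
  intro d
  induction d with
  | zero =>
    intro x a h ha
    show x = _
    refine Prod.ext ?_ rfl
    funext i
    show x.1 i = if a ≤ i.val ∧ i.val ≤ a + 0 then true else x.1 i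
    by_cases hc : a ≤ i.val ∧ i.val ≤ a + 0
    · rw [if_pos hc]
      have hia : i = ⟨a, by omega⟩ := Fin.ext (show _ = a by omega)
      rw [hia, ha]
    · rw [if_neg hc]
  | succ d ih =>
    intro x a h ha
    have h1 : a + 1 < n := by omega
    set z : Cfg n m :=
      (Function.update x.1 ⟨a + 1, h1⟩ (x.1 ⟨a + 1 - 1, by omega⟩), x.2) with hz
    have hz1 : z.1 ⟨a + 1, h1⟩ = true := by
      show Function.update x.1 ⟨a + 1, h1⟩ (x.1 ⟨a + 1 - 1, by omega⟩) ⟨a + 1, h1⟩ = true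
      rw [Function.update_self]
      exact ha
    have hih := ih z (a + 1) (by omega) hz1
    refine ⟨z, Step.left x ⟨a + 1, h1⟩ (Nat.succ_le_succ (Nat.zero_le a)), ?_⟩
    have heq : ((fun i : Fin n => if a + 1 ≤ i.val ∧ i.val ≤ a + 1 + d then true else z.1 i), z.2)
        = ((fun i : Fin n => if a ≤ i.val ∧ i.val ≤ a + (d + 1) then true else x.1 i), x.2) := by
      refine Prod.ext ?_ rfl
      funext i
      show (if a + 1 ≤ i.val ∧ i.val ≤ a + 1 + d then true else z.1 i)
          = (if a ≤ i.val ∧ i.val ≤ a + (d + 1) then true else x.1 i)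
      by_cases hc1 : a + 1 ≤ i.val ∧ i.val ≤ a + 1 + d
      · rw [if_pos hc1, if_pos (by omega)]
      · have hne : i ≠ (⟨a + 1, h1⟩ : Fin n) := by
          intro hh
          have hv : _ = a + 1 := congrArg Fin.val hh
          omega
        have hzi : z.1 i = x.1 i := Function.update_of_ne hne _ x.1
        rw [if_neg hc1, hzi]
        by_cases hc2 : i.val = a
        · rw [if_pos (by omega)]
          have hia : i = ⟨a, by omega⟩ := Fin.ext (show _ = a by omega)
          rw [hia, ha]
        · rw [if_neg (by omega)]
    rw [← heq]
    exact hih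

theorem propRight {n m : ℕ} (fc : Cfg n m → Bool) :
    ∀ (d : ℕ) (x : Cfg n m) (a : ℕ) (h : a + d < m),
      x.2 ⟨a, by omega⟩ = true →
      Steps fc d x
        (x.1, (fun j => if a ≤ j.val ∧ j.val ≤ a + d then true else x.2 j)) := by
  intro d
  induction d with
  | zero =>
    intro x a h ha
    show x = _
    refine Prod.ext rfl ?_
    funext j
    show x.2 j = if a ≤ j.val ∧ j.val ≤ a + 0 then true else x.2 j
    by_cases hc : a ≤ j.val ∧ j.val ≤ a + 0
    · rw [if_pos hc]
      have hja : j = ⟨a, by omega⟩ := Fin.ext (show _ = a by omega)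
      rw [hja, ha]
    · rw [if_neg hc]
  | succ d ih =>
    intro x a h ha
    have h1 : a + 1 < m := by omega
    set z : Cfg n m :=
      (x.1, Function.update x.2 ⟨a + 1, h1⟩ (x.2 ⟨a + 1 - 1, by omega⟩)) with hz
    have hz1 : z.2 ⟨a + 1, h1⟩ = true := by
      show Function.update x.2 ⟨a + 1, h1⟩ (x.2 ⟨a + 1 - 1, by omega⟩) ⟨a + 1, h1⟩ = true
      rw [Function.update_self]
      exact ha
    have hih := ih z (a + 1) (by omega) hz1
    refine ⟨z, Step.right x ⟨a + 1, h1⟩ (Nat.succ_le_succ (Nat.zero_le a)), ?_⟩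
    have heq : (z.1, (fun j : Fin m => if a + 1 ≤ j.val ∧ j.val ≤ a + 1 + d then true else z.2 j))
        = (x.1, (fun j : Fin m => if a ≤ j.val ∧ j.val ≤ a + (d + 1) then true else x.2 j)) := by
      refine Prod.ext rfl ?_
      funext j
      show (if a + 1 ≤ j.val ∧ j.val ≤ a + 1 + d then true else z.2 j)
          = (if a ≤ j.val ∧ j.val ≤ a + (d + 1) then true else x.2 j)
      by_cases hc1 : a + 1 ≤ j.val ∧ j.val ≤ a + 1 + d
      · rw [if_pos hc1, if_pos (by omega)]
      · have hne : j ≠ (⟨a + 1, h1⟩ : Fin m) := by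
          intro hh
          have hv : _ = a + 1 := congrArg Fin.val hh
          omega
        have hzj : z.2 j = x.2 j := Function.update_of_ne hne _ x.2
        rw [if_neg hc1, hzj]
        by_cases hc2 : j.val = a
        · rw [if_pos (by omega)]
          have hja : j = ⟨a, by omega⟩ := Fin.ext (show _ = a by omega)
          rw [hja, ha]
        · rw [if_neg (by omega)]
    rw [← heq]
    exact hih

/-- In a canonical positive double-cycle, any configuration with at least one
automaton at state 1 in each cycle reaches the all-ones configuration in at most
2(n+m)-5 asynchronous updates. -/
theorem stmt8 (n m : ℕ) (hn : 0 < n) (hm : 0 < m) (x : Cfg n m)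
    (hshare : x.1 ⟨0, hn⟩ = x.2 ⟨0, hm⟩)
    (hones : (∃ i, x.1 i = true) ∧ (∃ j, x.2 j = true)) :
    ∃ k ≤ 2 * (n + m) - 5,
      Steps (fun y : Cfg n m => y.1 ⟨n - 1, by omega⟩ && y.2 ⟨m - 1, by omega⟩)
        k x ((fun _ => true, fun _ => true) : Cfg n m) := by
  set fc : Cfg n m → Bool :=
    fun y : Cfg n m => y.1 ⟨n - 1, by omega⟩ && y.2 ⟨m - 1, by omega⟩ with hfc
  by_cases hx0 : x.1 ⟨0, hn⟩ = true
  · -- shared automaton already at 1: just propagate around both cycles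
    have hx0' : x.2 ⟨0, hm⟩ = true := hshare ▸ hx0
    have s1 := propLeft fc (n - 1) x 0 (by omega) hx0
    set y1 : Cfg n m :=
      ((fun i => if 0 ≤ i.val ∧ i.val ≤ 0 + (n - 1) then true else x.1 i), x.2) with hy1
    have hy12 : y1.2 ⟨0, hm⟩ = true := hx0'
    have s2 := propRight fc (m - 1) y1 0 (by omega) hy12
    have s := steps_trans s1 s2
    have hfinal : (y1.1, (fun j : Fin m =>
        if 0 ≤ j.val ∧ j.val ≤ 0 + (m - 1) then true else y1.2 j))
        = ((fun _ => true, fun _ => true) : Cfg n m) := by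
      refine Prod.ext ?_ ?_
      · funext i
        show (if 0 ≤ i.val ∧ i.val ≤ 0 + (n - 1) then true else x.1 i) = true
        rw [if_pos ⟨Nat.zero_le _, by have := i.isLt; omega⟩]
      · funext j
        show (if 0 ≤ j.val ∧ j.val ≤ 0 + (m - 1) then true else y1.2 j) = true
        rw [if_pos ⟨Nat.zero_le _, by have := j.isLt; omega⟩]
    rw [hfinal] at s
    exact ⟨(n - 1) + (m - 1), by omega, s⟩
  · -- shared automaton at 0
    have hx0f : x.1 ⟨0, hn⟩ = false := by
      cases h : x.1 ⟨0, hn⟩ with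
      | false => rfl
      | true => exact absurd h hx0
    have hx0f' : x.2 ⟨0, hm⟩ = false := hshare ▸ hx0f
    obtain ⟨⟨i0, hi0⟩, ⟨j0, hj0⟩⟩ := hones
    have ha1 : 1 ≤ i0.val := by
      rcases Nat.eq_zero_or_pos i0.val with h0 | h0
      · exfalso
        have : i0 = ⟨0, hn⟩ := Fin.ext h0
        rw [this, hx0f] at hi0
        exact Bool.false_ne_true hi0
      · exact h0
    have hb1 : 1 ≤ j0.val := by
      rcases Nat.eq_zero_or_pos j0.val with h0 | h0
      · exfalso
        have : j0 = ⟨0, hm⟩ := Fin.ext h0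
        rw [this, hx0f'] at hj0
        exact Bool.false_ne_true hj0
      · exact h0
    set a := i0.val with hadef
    set b := j0.val with hbdef
    have han : a < n := i0.isLt
    have hbm : b < m := j0.isLt
    -- phase 1: propagate the 1 at a to n-1
    have hxa : x.1 ⟨a, by omega⟩ = true := by
      have : (⟨a, by omega⟩ : Fin n) = i0 := Fin.ext rfl
      rw [this]; exact hi0
    have s1 := propLeft fc (n - 1 - a) x a (by omega) hxa
    set y1 : Cfg n m :=
      ((fun i => if a ≤ i.val ∧ i.val ≤ a + (n - 1 - a) then true else x.1 i), x.2) with hy1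
    -- phase 2: propagate the 1 at b to m-1
    have hy1b : y1.2 ⟨b, by omega⟩ = true := by
      show x.2 ⟨b, by omega⟩ = true
      have : (⟨b, by omega⟩ : Fin m) = j0 := Fin.ext rfl
      rw [this]; exact hj0
    have s2 := propRight fc (m - 1 - b) y1 b (by omega) hy1b
    set y2 : Cfg n m :=
      (y1.1, (fun j => if b ≤ j.val ∧ j.val ≤ b + (m - 1 - b) then true else y1.2 j)) with hy2
    -- phase 3: center update
    have hv : fc y2 = true := by
      have h1 : y2.1 ⟨n - 1, by omega⟩ = true := by
        show (if a ≤ n - 1 ∧ n - 1 ≤ a + (n - 1 - a) then true else x.1 _) = true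
        rw [if_pos (by omega)]
      have h2 : y2.2 ⟨m - 1, by omega⟩ = true := by
        show (if b ≤ m - 1 ∧ m - 1 ≤ b + (m - 1 - b) then true else y1.2 _) = true
        rw [if_pos (by omega)]
      show (y2.1 ⟨n - 1, by omega⟩ && y2.2 ⟨m - 1, by omega⟩) = true
      rw [h1, h2]; rfl
    set z : Cfg n m :=
      (Function.update y2.1 ⟨0, hn⟩ true, Function.update y2.2 ⟨0, hm⟩ true) with hzdef
    have s3 : Steps fc 1 y2 z := by
      refine ⟨z, ?_, rfl⟩
      have := Step.center (fc := fc) y2 ⟨0, hn⟩ ⟨0, hm⟩ rfl rfl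
      rwa [hv] at this
    -- phase 4: fill in remaining left positions 1..a-1
    have hz0 : z.1 ⟨0, by omega⟩ = true := by
      show Function.update y2.1 ⟨0, hn⟩ true ⟨0, by omega⟩ = true
      rw [Function.update_self]
    have s4 := propLeft fc (a - 1) z 0 (by omega) hz0
    set y3 : Cfg n m :=
      ((fun i => if 0 ≤ i.val ∧ i.val ≤ 0 + (a - 1) then true else z.1 i), z.2) with hy3
    -- phase 5: fill in remaining right positions 1..b-1
    have hy30 : y3.2 ⟨0, by omega⟩ = true := by
      show Function.update y2.2 ⟨0, hm⟩ true ⟨0, by omega⟩ = true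
      rw [Function.update_self]
    have s5 := propRight fc (b - 1) y3 0 (by omega) hy30
    have s := steps_trans (steps_trans (steps_trans (steps_trans s1 s2) s3) s4) s5
    have hfinal : (y3.1, (fun j : Fin m =>
        if 0 ≤ j.val ∧ j.val ≤ 0 + (b - 1) then true else y3.2 j))
        = ((fun _ => true, fun _ => true) : Cfg n m) := by
      refine Prod.ext ?_ ?_
      · funext i
        show (if 0 ≤ i.val ∧ i.val ≤ 0 + (a - 1) then true else z.1 i) = true
        by_cases hc : 0 ≤ i.val ∧ i.val ≤ 0 + (a - 1)
        · rw [if_pos hc]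
        · rw [if_neg hc]
          have hige : a ≤ i.val := by omega
          have hne : i ≠ (⟨0, hn⟩ : Fin n) := by
            intro hh
            have hv2 : _ = 0 := congrArg Fin.val hh
            omega
          show Function.update y2.1 ⟨0, hn⟩ true i = true
          rw [Function.update_of_ne hne]
          show (if a ≤ i.val ∧ i.val ≤ a + (n - 1 - a) then true else x.1 i) = true
          rw [if_pos ⟨hige, by have := i.isLt; omega⟩]
      · funext j
        show (if 0 ≤ j.val ∧ j.val ≤ 0 + (b - 1) then true else y3.2 j) = true
        by_cases hc : 0 ≤ j.val ∧ j.val ≤ 0 + (b - 1)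
        · rw [if_pos hc]
        · rw [if_neg hc]
          have hjge : b ≤ j.val := by omega
          have hne : j ≠ (⟨0, hm⟩ : Fin m) := by
            intro hh
            have hv2 : _ = 0 := congrArg Fin.val hh
            omega
          show Function.update y2.2 ⟨0, hm⟩ true j = true
          rw [Function.update_of_ne hne]
          show (if b ≤ j.val ∧ j.val ≤ b + (m - 1 - b) then true else y1.2 j) = true
          rw [if_pos ⟨hjge, by have := j.isLt; omega⟩]
    rw [hfinal] at s
    exact ⟨(n - 1 - a) + (m - 1 - b) + 1 + (a - 1) + (b - 1), by omega, s⟩
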